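/- Assume GCH. Let λ be an infinite cardinal and let ⟨d_α : α < λ⁺⁺⟩ be a family of sets of ordinals, each of cardinality at most λ. Then there exist a set I of ordinals below λ⁺⁺ of cardinality λ⁺⁺ and a set r of ordinals (the root) such that d_α ∩ d_β = r for all distinct α, β ∈ I; that is, ⟨d_α : α ∈ I⟩ forms a Δ-system. -/

import Mathlib

open Cardinal Ordinal

open Order Set in
lemma sSup_lt_of_small {s : Set Ordinal.{0}} {c : Cardinal.{0}} {a : Ordinal.{0}}
    (hs : #s ≤ Cardinal.lift.{1} c) (hc : c < a.cof) (h : ∀ x ∈ s, x < a) :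
    sSup s < a := by
  have ha : a ≠ 0 := by
    rintro rfl
    simp only [Ordinal.cof_zero] at hc
    exact (Cardinal.zero_le c).not_gt hc
  rcases s.eq_empty_or_nonempty with rfl | hne
  · rw [csSup_empty]
    exact pos_iff_ne_zero.2 ha
  · rcases eq_zero_or_pos c with rfl | hcpos
    · rw [Cardinal.lift_zero, le_zero_iff, Cardinal.mk_eq_zero_iff] at hs
      exact absurd hne.to_subtype (not_nonempty_iff.2 hs)
    · have h1 : #s ≤ #(ULift.{1} c.out) := by simpa using hs
      obtain ⟨f⟩ := (Cardinal.le_def _ _).1 h1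
      have hco : Nonempty s := hne.to_subtype
      obtain ⟨g, hg⟩ := f.injective.hasLeftInverse
      have hub : (⨆ i : c.out, ((g ⟨i⟩ : s) : Ordinal)) < a := by
        apply Ordinal.iSup_lt_ord _ (fun i => h _ (g ⟨i⟩).2)
        rwa [Cardinal.mk_out]
      refine lt_of_le_of_lt (csSup_le hne fun x hx => ?_) hub
      have : x = ((g ⟨(f ⟨x, hx⟩).down⟩ : s) : Ordinal) := by
        have := hg ⟨x, hx⟩
        simp only [ULift.up_down] at this ⊢
        rw [this]
      rw [this]
      exact le_ciSup (Ordinal.bddAbove_range _) ((f ⟨x, hx⟩).down)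

open Order Set in
lemma exists_large_T (lam : Cardinal.{0}) (hlam : ℵ₀ ≤ lam)
    (D : Ordinal.{0} → Set Ordinal.{0})
    (hD : ∀ α < (Order.succ (Order.succ lam)).ord, #(D α) ≤ Cardinal.lift.{1} lam) :
    ∃ β < (Order.succ (Order.succ lam)).ord,
      Cardinal.lift.{1} (Order.succ (Order.succ lam)) ≤
        #{α : Ordinal.{0} | α < (Order.succ (Order.succ lam)).ord ∧ sSup (D α ∩ Iio α) ≤ β} := by
  set κc := Order.succ (Order.succ lam) with hκc
  set κ := κc.ord with hκ
  have hℵκ : ℵ₀ ≤ κc := hlam.trans ((le_succ _).trans (le_succ _))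
  have hreg : Cardinal.IsRegular κc := isRegular_succ (hlam.trans (le_succ _))
  have hcof : κ.cof = κc := hreg.cof_eq
  have hlim : Order.IsSuccLimit κ := Cardinal.isSuccLimit_ord hℵκ
  set press := fun α => sSup (D α ∩ Iio α) with hpress
  set T := fun β => {α : Ordinal.{0} | α < κ ∧ press α ≤ β} with hT
  by_contra hcon
  push_neg at hcon
  have hTcard : ∀ β < κ, #(T β) ≤ Cardinal.lift.{1} (Order.succ lam) := fun β hβ => by
    have h1 := hcon β hβ
    rw [hκc, Cardinal.lift_succ, Order.lt_succ_iff] at h1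
    exact h1
  set h : Ordinal.{0} → Ordinal.{0} := fun β => sSup ((· + 1) '' T β) with hh
  have hhlt : ∀ β < κ, h β < κ := fun β hβ => by
    apply sSup_lt_of_small ((mk_image_le).trans (hTcard β hβ))
      (by rw [hcof]; exact Order.lt_succ _)
    rintro x ⟨α, hα, rfl⟩
    show α + 1 < κ
    rw [Ordinal.add_one_eq_succ]
    exact hlim.succ_lt hα.1
  have hTmono : ∀ a b, a ≤ b → T a ⊆ T b := fun a b hab α hα => ⟨hα.1, hα.2.trans hab⟩
  have hbddT : ∀ b, BddAbove ((· + 1) '' T b) := fun b =>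
    ⟨κ, by rintro x ⟨α, hα, rfl⟩; show α + 1 ≤ κ; rw [Ordinal.add_one_eq_succ]; exact (hlim.succ_lt hα.1).le⟩
  have hhmono : ∀ a b, a ≤ b → h a ≤ h b := fun a b hab =>
    csSup_le_csSup' (hbddT b) (Set.image_mono (hTmono a b hab))
  set h' : Ordinal.{0} → Ordinal.{0} := fun β => if β < κ then max (h β) (β + 1) else β + 1
    with hh'
  have hmono : ∀ a b, a ≤ b → b < κ → h' a ≤ h' b := fun a b hab hb => by
    rw [hh']
    simp only [if_pos hb, if_pos (lt_of_le_of_lt hab hb)]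
    exact max_le_max (hhmono a b hab) (add_le_add_left hab 1)
  have hinfl : ∀ β < κ, β < h' β := fun β hβ => by
    rw [hh']; simp only [if_pos hβ]
    exact lt_of_lt_of_le (lt_add_one β) (le_max_right _ _)
  have hbd : ∀ β < κ, h' β < κ := fun β hβ => by
    rw [hh']; simp only [if_pos hβ]
    refine max_lt (hhlt β hβ) ?_
    rw [Ordinal.add_one_eq_succ]; exact hlim.succ_lt hβ
  -- nfp stays below κ and is closed under h'
  have hnfp : ∀ x < κ, nfp h' x < κ ∧ ∀ β < nfp h' x, h' β < nfp h' x := by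
    intro x hx
    have hiter : ∀ n, h'^[n] x < κ := by
      intro n; induction n with
      | zero => simpa
      | succ n ih => rw [Function.iterate_succ_apply']; exact hbd _ ih
    constructor
    · rw [← iSup_iterate_eq_nfp]
      refine Ordinal.iSup_lt_ord ?_ hiter
      rw [Cardinal.mk_nat, hcof]
      exact hlam.trans_lt ((Order.lt_succ _).trans_le (le_succ _))
    · intro β hβ
      obtain ⟨n, hn⟩ := lt_nfp_iff.1 hβ
      calc h' β ≤ h' (h'^[n] x) := hmono _ _ hn.le (hiter n)
        _ = h'^[n + 1] x := (Function.iterate_succ_apply' _ _ _).symm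
        _ < h' (h'^[n + 1] x) := hinfl _ (hiter (n + 1))
        _ = h'^[n + 2] x := (Function.iterate_succ_apply' _ _ _).symm
        _ ≤ nfp h' x := iterate_le_nfp h' x (n + 2)
  -- deriv stays below κ and is closed under h'
  have hsl : ℵ₀ ≤ Order.succ lam := hlam.trans (le_succ _)
  have hderiv : ∀ ξ, ξ ≤ (Order.succ lam).ord →
      deriv h' ξ < κ ∧ ∀ β < deriv h' ξ, h' β < deriv h' ξ := by
    intro ξ
    induction ξ using Ordinal.induction with
    | h ξ IH =>
      intro hξ
      rcases Ordinal.zero_or_succ_or_isSuccLimit ξ with rfl | ⟨o, rfl⟩ | hl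
      · rw [deriv_zero_right]; exact hnfp 0 hlim.pos
      · rw [deriv_succ]
        have ho := IH o (Order.lt_succ o) (((Order.lt_succ o).trans_le hξ).le)
        exact hnfp _ (hlim.succ_lt ho.1)
      · rw [deriv_limit h' hl]
        have heq : (⨆ a : {a // a < ξ}, deriv h' a) = sSup (deriv h' '' Iio ξ) := by
          rw [iSup]; congr 1; ext x
          simp only [Set.mem_range, Set.mem_image, Set.mem_Iio, Subtype.exists]
          exact ⟨fun ⟨a, ha, hx⟩ => ⟨a, ha, hx⟩, fun ⟨a, ha, hx⟩ => ⟨a, ha, hx⟩⟩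
        rw [heq]
        have hbddS : BddAbove (deriv h' '' Iio ξ) := by
          refine ⟨κ, ?_⟩
          rintro x ⟨a, ha, rfl⟩
          exact (IH a ha (ha.le.trans hξ)).1.le
        constructor
        · apply sSup_lt_of_small (c := Order.succ lam)
            ((mk_image_le).trans ?_) (by rw [hcof]; exact Order.lt_succ _)
          · rintro x ⟨a, ha, rfl⟩
            exact (IH a ha (ha.le.trans hξ)).1
          · rw [Cardinal.mk_Iio_ordinal, Cardinal.lift_le]
            have := Ordinal.card_le_card hξ
            rwa [Cardinal.card_ord] at this
        · intro β hβ
          have hex : ∃ a < ξ, β < deriv h' a := by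
            by_contra hc2
            push_neg at hc2
            have : sSup (deriv h' '' Iio ξ) ≤ β := by
              apply csSup_le (Set.Nonempty.image _ (⟨0, hl.pos⟩ : (Iio ξ).Nonempty))
              rintro x ⟨a, ha, rfl⟩
              exact hc2 a ha
            exact absurd hβ this.not_gt
          obtain ⟨a, ha, hβa⟩ := hex
          have h1 := (IH a ha (ha.le.trans hξ)).2 β hβa
          have h2 : deriv h' a < deriv h' (Order.succ a) :=
            (isNormal_deriv h').strictMono (Order.lt_succ a)
          have h3 : deriv h' (Order.succ a) ∈ deriv h' '' Iio ξ :=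
            ⟨Order.succ a, hl.succ_lt ha, rfl⟩
          exact lt_of_lt_of_le (h1.trans h2) (le_csSup hbddS h3)
  -- the contradiction point
  set γ := deriv h' (Order.succ lam).ord with hγdef
  obtain ⟨hγκ, hγcl⟩ := hderiv _ le_rfl
  have hγpos : 0 < γ := lt_of_lt_of_le (Cardinal.isSuccLimit_ord hsl).pos
    ((isNormal_deriv h').strictMono.le_apply)
  have hcofγ : lam < γ.cof := by
    have : γ.cof = ((Order.succ lam).ord).cof := Ordinal.cof_map_of_isNormal (isNormal_deriv h') (Cardinal.isSuccLimit_ord hsl)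
    rw [this, (isRegular_succ hlam).cof_eq]
    exact Order.lt_succ lam
  have hβγ : press γ < γ := by
    apply sSup_lt_of_small ((mk_le_mk_of_subset Set.inter_subset_left).trans (hD γ hγκ)) hcofγ
    exact fun x hx => hx.2
  have hmem : γ ∈ T (press γ) := ⟨hγκ, le_rfl⟩
  have h1 : γ + 1 ≤ h (press γ) := le_csSup (hbddT _) ⟨γ, hmem, rfl⟩
  have h2 : h (press γ) ≤ h' (press γ) := by
    rw [hh']; simp only [if_pos (hβγ.trans hγκ)]
    exact le_max_left _ _
  have h3 : h' (press γ) < γ := hγcl _ hβγ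
  exact absurd ((lt_add_one γ).trans_le (h1.trans (h2.trans h3.le))) (lt_irrefl γ)

open Order Set in
lemma delta_core (lam : Cardinal.{0}) (hlam : ℵ₀ ≤ lam)
    (gch2 : (Order.succ lam) ^ lam = Order.succ lam)
    (D : Ordinal.{0} → Set Ordinal.{0})
    (hDsub : ∀ α, D α ⊆ Iio (Order.succ (Order.succ lam)).ord)
    (hD : ∀ α < (Order.succ (Order.succ lam)).ord, #(D α) ≤ Cardinal.lift.{1} lam) :
    ∃ I : Set Ordinal.{0}, I ⊆ Set.Iio (Order.succ (Order.succ lam)).ord ∧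
      #I = Cardinal.lift.{1} (Order.succ (Order.succ lam)) ∧
      ∃ r : Set Ordinal.{0}, ∀ α ∈ I, ∀ β ∈ I, α ≠ β → D α ∩ D β = r := by
  set κc := Order.succ (Order.succ lam) with hκc
  set κ := κc.ord with hκ
  have hℵκ : ℵ₀ ≤ κc := hlam.trans ((le_succ _).trans (le_succ _))
  have hreg : Cardinal.IsRegular κc := isRegular_succ (hlam.trans (le_succ _))
  have hcof : κ.cof = κc := hreg.cof_eq
  have hlim : Order.IsSuccLimit κ := Cardinal.isSuccLimit_ord hℵκ
  have hsl : ℵ₀ ≤ Order.succ lam := hlam.trans (le_succ _)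
  have hκ₁ : Cardinal.lift.{1} κc = Order.succ (Order.succ (Cardinal.lift.{1} lam)) := by
    rw [hκc, Cardinal.lift_succ, Cardinal.lift_succ]
  have hℵκ₁ : ℵ₀ ≤ Cardinal.lift.{1} κc := by
    rw [← Cardinal.lift_aleph0.{1,0}]; exact Cardinal.lift_le.2 hℵκ
  have hregκ₁ : Cardinal.IsRegular (Cardinal.lift.{1} κc) := by
    rw [hκ₁]
    refine isRegular_succ ?_
    rw [← Cardinal.lift_aleph0.{1,0}]
    exact (Cardinal.lift_le.2 hlam).trans (le_succ _)
  have hcard_le : ∀ b < κ, (#(Iic b) : Cardinal.{1}) ≤ Cardinal.lift.{1} (Order.succ lam) := by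
    intro b hb
    rw [← Order.Iio_succ, ← Ordinal.add_one_eq_succ, Cardinal.mk_Iio_ordinal, Cardinal.lift_le]
    have hb1 : b + 1 < κ := by rw [Ordinal.add_one_eq_succ]; exact hlim.succ_lt hb
    exact Order.lt_succ_iff.1 (Cardinal.lt_ord.1 hb1)
  -- step 1 : large T
  obtain ⟨β₀, hβ₀κ, hbig⟩ := exists_large_T lam hlam D hD
  set press := fun α => sSup (D α ∩ Iio α) with hpress
  set A₀ := {α : Ordinal.{0} | α < κ ∧ press α ≤ β₀} with hA₀
  set β₁ := β₀ + 1 with hβ₁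
  have hβ₁κ : β₁ < κ := by rw [hβ₁, Ordinal.add_one_eq_succ]; exact hlim.succ_lt hβ₀κ
  set A₁ := A₀ \ Iic β₁ with hA₁
  have hbig1 : Cardinal.lift.{1} κc ≤ #A₁ := by
    by_contra hcon
    push_neg at hcon
    have h1 : A₀ ⊆ A₁ ∪ Iic β₁ := by
      intro α hα
      by_cases hc : α ∈ Iic β₁
      · exact Or.inr hc
      · exact Or.inl ⟨hα, hc⟩
    have h2 : #A₀ ≤ #A₁ + #(Iic β₁) := (mk_le_mk_of_subset h1).trans (Cardinal.mk_union_le _ _)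
    have h3 : #A₀ < Cardinal.lift.{1} κc := by
      refine h2.trans_lt (Cardinal.add_lt_of_lt hℵκ₁ hcon ?_)
      refine (hcard_le β₁ hβ₁κ).trans_lt ?_
      rw [hκ₁, Cardinal.lift_succ]
      exact Order.lt_succ _
    exact absurd hbig h3.not_ge
  -- step 2 : pigeonhole on traces
  set Q := {t : Set Ordinal.{0} // t ⊆ Iio β₁ ∧ #t ≤ Cardinal.lift.{1} lam} with hQ
  have hQcard : #Q < (Cardinal.lift.{1} κc).ord.cof := by
    rw [hregκ₁.cof_eq]
    have h1 : #Q ≤ max #(Iio β₁) ℵ₀ ^ Cardinal.lift.{1} lam := by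
      have := Cardinal.mk_bounded_subset_le (Iio β₁) (Cardinal.lift.{1} lam)
      simpa using this
    have h2 : max (#(Iio β₁)) ℵ₀ ≤ Cardinal.lift.{1} (Order.succ lam) := by
      refine max_le ?_ (by rw [← Cardinal.lift_aleph0.{1,0}]; exact Cardinal.lift_le.2 hsl)
      rw [Cardinal.mk_Iio_ordinal, Cardinal.lift_le]
      exact Order.lt_succ_iff.1 (Cardinal.lt_ord.1 hβ₁κ)
    have h3 : #Q ≤ Cardinal.lift.{1} (Order.succ lam) := by
      refine h1.trans ((Cardinal.power_le_power_right h2).trans ?_)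
      rw [← Cardinal.lift_power, gch2]
    refine h3.trans_lt ?_
    rw [hκ₁, Cardinal.lift_succ]
    exact Order.lt_succ _
  set f : A₁ → Q := fun α => ⟨D α ∩ Iio β₁, inter_subset_right,
    (mk_le_mk_of_subset inter_subset_left).trans (hD α α.2.1.1)⟩ with hf
  obtain ⟨r', hr'⟩ := Cardinal.infinite_pigeonhole_card f (Cardinal.lift.{1} κc) hbig1 hℵκ₁ hQcard
  set A₂ := (Subtype.val '' (f ⁻¹' {r'}) : Set Ordinal.{0}) with hA₂
  have hA₂card : Cardinal.lift.{1} κc ≤ #A₂ := by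
    refine hr'.trans ?_
    rw [Cardinal.mk_image_eq_of_injOn _ _ (Subtype.val_injective.injOn)]
  have hA₂mem : ∀ a ∈ A₂, a < κ ∧ press a ≤ β₀ ∧ β₁ < a ∧ D a ∩ Iio β₁ = r'.val := by
    rintro a ⟨⟨a, ha₁⟩, hpre, rfl⟩
    refine ⟨ha₁.1.1, ha₁.1.2, not_le.1 ha₁.2, ?_⟩
    have : f ⟨a, ha₁⟩ = r' := hpre
    rw [← this]
  have hA₂κ : A₂ ⊆ Iio κ := fun a ha => (hA₂mem a ha).1
  -- step 3 : A₂ is unbounded in κ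
  have hunb : ∀ b < κ, ∃ a ∈ A₂, b < a := by
    intro b hb
    by_contra hcon
    push_neg at hcon
    have h1 : A₂ ⊆ Iic b := fun a ha => hcon a ha
    have h2 : #A₂ < Cardinal.lift.{1} κc := by
      refine ((mk_le_mk_of_subset h1).trans (hcard_le b hb)).trans_lt ?_
      rw [hκ₁, Cardinal.lift_succ]
      exact Order.lt_succ _
    exact absurd hA₂card h2.not_ge
  -- bound function
  set s : Ordinal.{0} → Ordinal.{0} := fun α => sSup (D α) + 1 with hs
  have hsκ : ∀ a < κ, s a < κ := by
    intro a ha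
    have hlam' : lam < κ.cof := by
      rw [hcof]; exact lt_of_lt_of_le (Order.lt_succ lam) (le_succ _)
    have h1 : sSup (D a) < κ := sSup_lt_of_small (hD a ha) hlam' (fun x hx => hDsub a hx)
    have h2 : sSup (D a) + 1 < κ := by
      rw [Ordinal.add_one_eq_succ]; exact hlim.succ_lt h1
    exact h2
  -- recursion
  obtain ⟨i, hi⟩ : ∃ i : Ordinal.{0} → Ordinal.{0}, ∀ ξ,
      i ξ = sInf {a | a ∈ A₂ ∧ ∀ η, η < ξ → i η < a ∧ s (i η) < a} := by
    refine ⟨Ordinal.lt_wf.fix (fun ξ ih =>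
      sInf {a | a ∈ A₂ ∧ ∀ η, ∀ (hη : η < ξ), ih η hη < a ∧ s (ih η hη) < a}), fun ξ => ?_⟩
    rw [WellFounded.fix_eq]
  have hseq : ∀ ξ < κ, i ξ ∈ A₂ ∧ ∀ η, η < ξ → i η < i ξ ∧ s (i η) < i ξ := by
    intro ξ
    induction ξ using Ordinal.induction with
    | h ξ IH =>
      intro hξ
      have hbdd1 : BddAbove (i '' Iio ξ) := by
        refine ⟨κ, ?_⟩
        rintro x ⟨η, hη, rfl⟩
        exact (hA₂κ (IH η hη (hη.trans hξ)).1).le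
      have hbdd2 : BddAbove ((fun η => s (i η)) '' Iio ξ) := by
        refine ⟨κ, ?_⟩
        rintro x ⟨η, hη, rfl⟩
        exact (hsκ _ (hA₂κ (IH η hη (hη.trans hξ)).1)).le
      have hBne : ({a | a ∈ A₂ ∧ ∀ η, η < ξ → i η < a ∧ s (i η) < a}).Nonempty := by
        have hbd1 : sSup (i '' Iio ξ) < κ := by
          apply sSup_lt_of_small (c := ξ.card)
            ((mk_image_le).trans (by rw [Cardinal.mk_Iio_ordinal]))
            (by rw [hcof]; exact Cardinal.lt_ord.1 hξ)
          rintro x ⟨η, hη, rfl⟩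
          exact hA₂κ (IH η hη (hη.trans hξ)).1
        have hbd2 : sSup ((fun η => s (i η)) '' Iio ξ) < κ := by
          apply sSup_lt_of_small (c := ξ.card)
            ((mk_image_le).trans (by rw [Cardinal.mk_Iio_ordinal]))
            (by rw [hcof]; exact Cardinal.lt_ord.1 hξ)
          rintro x ⟨η, hη, rfl⟩
          exact hsκ _ (hA₂κ (IH η hη (hη.trans hξ)).1)
        obtain ⟨a, haA, hab⟩ := hunb
          (max (sSup (i '' Iio ξ)) (sSup ((fun η => s (i η)) '' Iio ξ))) (max_lt hbd1 hbd2)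
        refine ⟨a, haA, fun η hη => ⟨?_, ?_⟩⟩
        · refine lt_of_le_of_lt ?_ hab
          exact le_trans (le_csSup hbdd1 (Set.mem_image_of_mem i hη)) (le_max_left _ _)
        · refine lt_of_le_of_lt ?_ hab
          exact le_trans (le_csSup hbdd2 (Set.mem_image_of_mem _ hη)) (le_max_right _ _)
      have hmem := csInf_mem hBne
      rw [← hi ξ] at hmem
      exact ⟨hmem.1, hmem.2⟩
  -- conclusion
  have hIsub : i '' Iio κ ⊆ Set.Iio κ := by
    rintro x ⟨ξ, hξ, rfl⟩
    exact hA₂κ (hseq ξ hξ).1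
  have hIcard : #(i '' Iio κ) = Cardinal.lift.{1} κc := by
    rw [Cardinal.mk_image_eq_of_injOn _ _ ?_, Cardinal.mk_Iio_ordinal, Cardinal.card_ord]
    intro a ha b hb hab
    by_contra hne
    rcases lt_or_gt_of_ne hne with h | h
    · exact absurd hab ((hseq b hb).2 a h).1.ne
    · exact absurd hab.symm ((hseq a ha).2 b h).1.ne
  refine ⟨i '' Iio κ, hIsub, hIcard, r'.val, ?_⟩
  have key : ∀ η ξ, η < ξ → ξ < κ → D (i η) ∩ D (i ξ) = r'.val := by
    intro η ξ hηξ hξ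
    obtain ⟨hiξA, hprop⟩ := hseq ξ hξ
    obtain ⟨hiηA, -⟩ := hseq η (hηξ.trans hξ)
    obtain ⟨-, hpressξ, -, htrξ⟩ := hA₂mem _ hiξA
    obtain ⟨-, -, -, htrη⟩ := hA₂mem _ hiηA
    have hsηξ : s (i η) < i ξ := (hprop η hηξ).2
    ext x
    constructor
    · rintro ⟨hxη, hxξ⟩
      have hx1 : x < i ξ := by
        refine lt_of_le_of_lt ?_ hsηξ
        have hxle : x ≤ sSup (D (i η)) :=
          le_csSup ⟨κ, fun y hy => (hDsub _ hy).le⟩ hxη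
        exact hxle.trans (le_of_lt (lt_add_one _))
      have hx2 : x ≤ β₀ := by
        refine le_trans ?_ hpressξ
        exact le_csSup ⟨κ, fun y hy => (hDsub _ hy.1).le⟩ ⟨hxξ, hx1⟩
      have hxr : x ∈ D (i ξ) ∩ Iio β₁ := ⟨hxξ, hx2.trans_lt (lt_add_one β₀)⟩
      rwa [htrξ] at hxr
    · intro hx
      constructor
      · rw [← htrη] at hx; exact hx.1
      · rw [← htrξ] at hx; exact hx.1
  rintro a ⟨η, hη, rfl⟩ b ⟨ξ, hξ, rfl⟩ hab
  rcases lt_trichotomy η ξ with h | rfl | h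
  · exact key η ξ h hξ
  · exact absurd rfl hab
  · rw [Set.inter_comm]; exact key ξ η h hη

open Order Set in
/-- Assume GCH.  Let λ be an infinite cardinal and ⟨d_α : α < λ⁺⁺⟩ a family of
sets of ordinals, each of cardinality at most λ.  Then there is a set I of
ordinals below λ⁺⁺ of cardinality λ⁺⁺ and a root r such that d_α ∩ d_β = r for
all distinct α, β ∈ I. -/
theorem statement8
    (gch : ∀ c : Cardinal.{0}, ℵ₀ ≤ c → (2 : Cardinal.{0}) ^ c = Order.succ c)
    (lam : Cardinal.{0}) (hlam : ℵ₀ ≤ lam)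
    (d : Ordinal.{0} → Set Ordinal.{0})
    (hd : ∀ α < (Order.succ (Order.succ lam)).ord, #(d α) ≤ Cardinal.lift.{1} lam) :
    ∃ I : Set Ordinal.{0},
      I ⊆ Set.Iio (Order.succ (Order.succ lam)).ord ∧
      #I = Cardinal.lift.{1} (Order.succ (Order.succ lam)) ∧
      ∃ r : Set Ordinal.{0}, ∀ α ∈ I, ∀ β ∈ I, α ≠ β → d α ∩ d β = r := by
  set κc := Order.succ (Order.succ lam) with hκc
  set κ := κc.ord with hκ
  have hℵκ : ℵ₀ ≤ κc := hlam.trans ((le_succ _).trans (le_succ _))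
  have hℵκ₁ : ℵ₀ ≤ Cardinal.lift.{1} κc := by
    rw [← Cardinal.lift_aleph0.{1,0}]; exact Cardinal.lift_le.2 hℵκ
  -- GCH consequence
  have gch2 : (Order.succ lam) ^ lam = Order.succ lam := by
    have h2l : (2 : Cardinal.{0}) ^ lam = Order.succ lam := gch lam hlam
    apply le_antisymm
    · calc (Order.succ lam) ^ lam ≤ ((2 : Cardinal.{0}) ^ lam) ^ lam :=
            Cardinal.power_le_power_right (le_of_eq h2l.symm)
        _ = (2 : Cardinal.{0}) ^ (lam * lam) := by rw [← Cardinal.power_mul]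
        _ = (2 : Cardinal.{0}) ^ lam := by rw [Cardinal.mul_eq_self hlam]
        _ = Order.succ lam := h2l
    · conv_lhs => rw [← Cardinal.power_one (Order.succ lam)]
      exact Cardinal.power_le_power_left
        ((Cardinal.aleph0_pos.trans_le (hlam.trans (le_succ _))).ne')
        (Cardinal.one_le_aleph0.trans hlam)
  -- collapse
  set U := ⋃ (α : ↥(Iio κ)), d ↑α with hU
  have hUcard : #U ≤ #(Iio κ) := by
    refine (Cardinal.mk_iUnion_le _).trans ?_
    rw [Cardinal.mk_Iio_ordinal, Cardinal.card_ord]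
    have h1 : ⨆ (α : ↥(Iio κ)), #(d ↑α) ≤ Cardinal.lift.{1} lam :=
      ciSup_le' fun α => hd _ α.2
    calc Cardinal.lift.{1} κc * ⨆ (α : ↥(Iio κ)), #(d ↑α)
        ≤ Cardinal.lift.{1} κc * Cardinal.lift.{1} κc := by
          refine mul_le_mul_right (h1.trans ?_) _
          exact Cardinal.lift_le.2 ((le_succ _).trans (le_succ _))
      _ = Cardinal.lift.{1} κc := Cardinal.mul_eq_self hℵκ₁
  obtain ⟨e⟩ := (Cardinal.le_def _ _).1 hUcard
  set g : ↥U → Ordinal.{0} := fun x => (e x).val with hg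
  have hginj : Function.Injective g := fun a b hab => e.injective (Subtype.ext hab)
  set D : Ordinal.{0} → Set Ordinal.{0} := fun α => g '' {x : ↥U | ↑x ∈ d α} with hD'
  have hDsub : ∀ α, D α ⊆ Iio κ := by
    rintro α x ⟨y, hy, rfl⟩
    exact (e y).2
  have hDcard : ∀ α < κ, #(D α) ≤ Cardinal.lift.{1} lam := by
    intro α hα
    refine (mk_image_le).trans (le_trans ?_ (hd α hα))
    have : {x : ↥U | ↑x ∈ d α} ↪ ↥(d α) :=
      ⟨fun x => ⟨x.val.val, Set.mem_setOf.mp x.2⟩,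
       fun a b hab => by
         rcases a with ⟨⟨xa, hxa⟩, ha⟩
         rcases b with ⟨⟨xb, hxb⟩, hb⟩
         simp only [Subtype.mk.injEq] at hab ⊢
         exact hab⟩
    exact Cardinal.mk_le_of_injective this.injective
  obtain ⟨I, hIsub, hIcard, r', hroot⟩ := delta_core lam hlam gch2 D hDsub hDcard
  refine ⟨I, hIsub, hIcard, {x : Ordinal.{0} | ∃ hx : x ∈ U, g ⟨x, hx⟩ ∈ r'}, ?_⟩
  intro α hα β hβ hαβ
  have hr := hroot α hα β hβ hαβ
  ext x
  constructor
  · rintro ⟨hxα, hxβ⟩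
    have hxU : x ∈ U := Set.mem_iUnion.2 ⟨⟨α, hIsub hα⟩, hxα⟩
    have hmem : g ⟨x, hxU⟩ ∈ D α ∩ D β := ⟨⟨⟨x, hxU⟩, hxα, rfl⟩, ⟨⟨x, hxU⟩, hxβ, rfl⟩⟩
    rw [hr] at hmem
    exact ⟨hxU, hmem⟩
  · rintro ⟨hxU, hgr⟩
    rw [← hr] at hgr
    obtain ⟨⟨y₁, hy₁, he₁⟩, ⟨y₂, hy₂, he₂⟩⟩ := hgr
    have h1 := hginj he₁
    have h2 := hginj he₂
    rw [h1] at hy₁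
    rw [h2] at hy₂
    exact ⟨hy₁, hy₂⟩
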